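/- Let (g,σ,B) be an indecomposable solvable symmetric triple with eigenspace decomposition g = h ⊕ m and dim m > 1, and let z := z(g) denote the center of g (which lies in m). Then there exist subspaces W and z* of m such that m = z ⊕ W ⊕ z* (internal direct sum), ⁅h,m⁆ = z ⊕ W, B restricted to W is nondegenerate, z* is totally isotropic, B(W, z) = 0, B(W, z*) = 0, and the pairing z × z* → ℝ, (a,b) ↦ B(a,b), is nondegenerate. -/

import Mathlib

set_option maxHeartbeats 2000000 in
/-- Every indecomposable solvable symmetric triple with `dim m > 1` admits
an adapted decomposition `m = z ⊕ W ⊕ z*` with `⁅h,m⁆ = z ⊕ W`, `B|_W` nondegenerate, `z*`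
totally isotropic, `W ⟂ z`, `W ⟂ z*`, and `B` pairing `z` with `z*` nondegenerately. -/
theorem first_adapted_decomposition
    (L : Type*) [LieRing L] [LieAlgebra ℝ L] [FiniteDimensional ℝ L]
    [LieAlgebra.IsSolvable L]
    (σ : L →ₗ⁅ℝ⁆ L) (hσ : ∀ x, σ (σ x) = x)
    (H M : Submodule ℝ L)
    (hH : ∀ x, x ∈ H ↔ σ x = x)
    (hM : ∀ x, x ∈ M ↔ σ x = -x)
    (hcompl : IsCompl H M)
    (hHspan : H = Submodule.span ℝ {z : L | ∃ x ∈ M, ∃ y ∈ M, ⁅x, y⁆ = z})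
    (B : LinearMap.BilinForm ℝ L)
    (hBnd : B.Nondegenerate)
    (hBsymm : ∀ x y : L, B x y = B y x)
    (hBσ : ∀ x y : L, B (σ x) (σ y) = B x y)
    (hBad : ∀ x y z : L, B ⁅x, y⁆ z = B x ⁅y, z⁆)
    (hindec : ∀ m' : Submodule ℝ L, m' ≤ M →
      (∀ h ∈ H, ∀ x ∈ m', ⁅h, x⁆ ∈ m') →
      (∀ x ∈ m', (∀ y ∈ m', B x y = 0) → x = 0) →
      m' = ⊥ ∨ m' = M)
    (hdim : 1 < Module.finrank ℝ M) :
    ∃ W Zstar : Submodule ℝ L,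
      W ≤ M ∧ Zstar ≤ M ∧
      -- m = z ⊕ W ⊕ z* as an internal direct sum
      Disjoint (LieAlgebra.center ℝ L).toSubmodule W ∧
      Disjoint ((LieAlgebra.center ℝ L).toSubmodule ⊔ W) Zstar ∧
      (LieAlgebra.center ℝ L).toSubmodule ⊔ W ⊔ Zstar = M ∧
      -- ⁅h,m⁆ = z ⊕ W
      Submodule.span ℝ {x : L | ∃ h ∈ H, ∃ m ∈ M, ⁅h, m⁆ = x}
        = (LieAlgebra.center ℝ L).toSubmodule ⊔ W ∧
      -- B restricted to W is nondegenerate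
      (∀ x ∈ W, (∀ y ∈ W, B x y = 0) → x = 0) ∧
      -- z* is totally isotropic
      (∀ x ∈ Zstar, ∀ y ∈ Zstar, B x y = 0) ∧
      -- W ⟂ z and W ⟂ z*
      (∀ x ∈ W, ∀ y ∈ LieAlgebra.center ℝ L, B x y = 0) ∧
      (∀ x ∈ W, ∀ y ∈ Zstar, B x y = 0) ∧
      -- z and z* are nondegenerately paired by B
      (∀ a ∈ LieAlgebra.center ℝ L, (∀ b ∈ Zstar, B a b = 0) → a = 0) ∧
      (∀ b ∈ Zstar, (∀ a ∈ LieAlgebra.center ℝ L, B a b = 0) → b = 0) := by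
  classical
  set Zc : Submodule ℝ L := (LieAlgebra.center ℝ L).toSubmodule with hZcdef
  have hmemZ : ∀ x : L, x ∈ Zc ↔ ∀ y : L, ⁅y, x⁆ = 0 := by
    intro x
    rw [hZcdef]
    exact LieModule.mem_maxTrivSubmodule ℝ L L x
  -- H ⟂ M
  have hHM : ∀ x ∈ H, ∀ y ∈ M, B x y = 0 := by
    intro x hx y hy
    have : B x y = - B x y := by
      conv_lhs => rw [← hBσ x y, (hH x).mp hx, (hM y).mp hy, map_neg]
    linarith
  -- decomposition of arbitrary elements
  have hdecomp : ∀ l : L, ∃ h ∈ H, ∃ m ∈ M, h + m = l := by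
    intro l
    have : l ∈ H ⊔ M := by rw [hcompl.sup_eq_top]; exact Submodule.mem_top
    obtain ⟨h, hh, m, hm, hl⟩ := Submodule.mem_sup.mp this
    exact ⟨h, hh, m, hm, hl⟩
  -- a vector orthogonal to both H and M is zero
  have hzero : ∀ x : L, (∀ h ∈ H, B x h = 0) → (∀ m ∈ M, B x m = 0) → x = 0 := by
    intro x h1 h2
    apply hBnd.1
    intro l
    obtain ⟨h, hh, m, hm, rfl⟩ := hdecomp l
    rw [map_add, h1 h hh, h2 m hm, add_zero]
  -- the center is contained in M
  have hZM : Zc ≤ M := by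
    intro c hc
    rw [hmemZ] at hc
    have hd : σ c + c ∈ H := by rw [hH, map_add, hσ, add_comm]
    have hσc : ∀ y : L, ⁅y, σ c⁆ = 0 := by
      intro y
      have e1 : σ ⁅σ y, c⁆ = ⁅σ (σ y), σ c⁆ := σ.map_lie _ _
      rw [hσ, hc (σ y), map_zero] at e1
      exact e1.symm
    have hdc : ∀ y : L, ⁅y, σ c + c⁆ = 0 := fun y => by
      rw [lie_add, hσc y, hc y, add_zero]
    have hd0 : σ c + c = 0 := by
      apply hzero
      · intro h hh
        rw [hHspan] at hh
        induction hh using Submodule.span_induction with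
        | mem t ht =>
            obtain ⟨a, _, b, _, rfl⟩ := ht
            rw [hBsymm, hBad, hdc b, map_zero]
        | zero => rw [map_zero]
        | add s t _ _ hs ht => rw [map_add, hs, ht, add_zero]
        | smul r s _ hs => rw [map_smul, hs, smul_zero]
      · intro m hm; exact hHM _ hd _ hm
    rw [hM, eq_neg_iff_add_eq_zero]
    exact hd0
  -- the span of brackets [h,m]
  set K : Submodule ℝ L := Submodule.span ℝ {x : L | ∃ h ∈ H, ∃ m ∈ M, ⁅h, m⁆ = x}
    with hKdef
  have hKM : K ≤ M := by
    rw [hKdef]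
    apply Submodule.span_le.mpr
    rintro x ⟨h, hh, m, hm, rfl⟩
    rw [SetLike.mem_coe, hM, σ.map_lie, (hH h).mp hh, (hM m).mp hm, lie_neg]
  -- the restricted form on M
  set BM : LinearMap.BilinForm ℝ ↥M := B.restrict M with hBMdef
  have hBMapp : ∀ x y : ↥M, BM x y = B (x : L) (y : L) := fun x y => rfl
  have hBMrefl : BM.IsRefl := by
    intro x y h
    rw [hBMapp] at h ⊢
    rw [hBsymm]; exact h
  have hBMnd : BM.Nondegenerate := by
    refine LinearMap.BilinForm.Nondegenerate.ofSeparatingLeft ?_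
    intro x hx
    have : (x : L) = 0 := by
      apply hzero
      · intro h hh
        rw [hBsymm]; exact hHM _ hh _ x.2
      · intro m hm
        exact hx ⟨m, hm⟩
    exact Subtype.ext this
  set K' : Submodule ℝ ↥M := K.comap M.subtype with hK'def
  set Z' : Submodule ℝ ↥M := Zc.comap M.subtype with hZ'def
  have hmemK' : ∀ x : ↥M, x ∈ K' ↔ (x : L) ∈ K := fun x => Iff.rfl
  have hmemZ' : ∀ x : ↥M, x ∈ Z' ↔ (x : L) ∈ Zc := fun x => Iff.rfl
  have hmapK : K'.map M.subtype = K := by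
    rw [hK'def, Submodule.map_comap_subtype, inf_eq_right.mpr hKM]
  have hmapZ : Z'.map M.subtype = Zc := by
    rw [hZ'def, Submodule.map_comap_subtype, inf_eq_right.mpr hZM]
  -- the orthogonal complement of K' in M is the center
  have horthK : BM.orthogonal K' = Z' := by
    ext x
    rw [LinearMap.BilinForm.mem_orthogonal_iff, hmemZ', hmemZ]
    constructor
    · intro hx
      -- first, brackets with elements of M vanish
      have hxM : ∀ m ∈ M, ⁅m, (x : L)⁆ = 0 := by
        intro m hm
        have hw : ⁅m, (x : L)⁆ ∈ H := by
          rw [hH, σ.map_lie, (hM m).mp hm, (hM (x : L)).mp x.2, neg_lie, lie_neg, neg_neg]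
        apply hzero
        · intro h hh
          rw [hBsymm, ← hBad]
          have hbm : ⁅h, m⁆ ∈ M := by
            rw [hM, σ.map_lie, (hH h).mp hh, (hM m).mp hm, lie_neg]
          have hbk : ⁅h, m⁆ ∈ K := Submodule.subset_span ⟨h, hh, m, hm, rfl⟩
          exact hx ⟨⁅h, m⁆, hbm⟩ hbk
        · intro m' hm'
          exact hHM _ hw _ hm'
      -- then brackets with elements of H vanish too
      have hxH : ∀ h ∈ H, ⁅h, (x : L)⁆ = 0 := by
        intro h hh
        rw [hHspan] at hh
        induction hh using Submodule.span_induction with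
        | mem t ht =>
            obtain ⟨a, ha, b, hb, rfl⟩ := ht
            rw [lie_lie, hxM a ha, hxM b hb, lie_zero, lie_zero, sub_zero]
        | zero => rw [zero_lie]
        | add s t _ _ hs ht => rw [add_lie, hs, ht, add_zero]
        | smul r s _ hs => rw [smul_lie, hs, smul_zero]
      intro y
      obtain ⟨h, hh, m, hm, rfl⟩ := hdecomp y
      rw [add_lie, hxH h hh, hxM m hm, add_zero]
    · intro hx n hn
      have hKprop : ∀ t ∈ K, B t (x : L) = 0 := by
        intro t ht
        rw [hKdef] at ht
        induction ht using Submodule.span_induction with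
        | mem t ht =>
            obtain ⟨a, _, b, hb, rfl⟩ := ht
            rw [hBad]
            rw [show ⁅b, (x : L)⁆ = 0 from hx b, map_zero]
        | zero => rw [map_zero, LinearMap.zero_apply]
        | add s t _ _ hs ht => rw [map_add, LinearMap.add_apply, hs, ht, add_zero]
        | smul r s _ hs => rw [map_smul, LinearMap.smul_apply, hs, smul_zero]
      exact hKprop _ hn
  -- the center is totally isotropic
  have haniso : ∀ c ∈ Zc, B c c = 0 := by
    intro c hc
    by_contra hne
    have hc0 : c ≠ 0 := by rintro rfl; rw [map_zero] at hne; exact hne rfl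
    have hcM : c ∈ M := hZM hc
    rcases hindec (ℝ ∙ c) ((Submodule.span_singleton_le_iff_mem c M).mpr hcM)
        (by
          intro h _ x hx
          obtain ⟨t, rfl⟩ := Submodule.mem_span_singleton.mp hx
          rw [lie_smul, (hmemZ c).mp hc h, smul_zero]
          exact Submodule.zero_mem _)
        (by
          intro x hx hx0
          obtain ⟨t, rfl⟩ := Submodule.mem_span_singleton.mp hx
          have := hx0 c (Submodule.mem_span_singleton_self c)
          rw [map_smul, LinearMap.smul_apply, smul_eq_mul] at this
          rcases mul_eq_zero.mp this with h | h
          · rw [h, zero_smul]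
          · exact absurd h hne) with h | h
    · have : c ∈ (⊥ : Submodule ℝ L) := h ▸ Submodule.mem_span_singleton_self c
      exact hc0 (Submodule.mem_bot ℝ |>.mp this)
    · have : Module.finrank ℝ ↥M = 1 := by
        rw [← h]; exact finrank_span_singleton hc0
      omega
  have htiso : ∀ a ∈ Zc, ∀ b ∈ Zc, B a b = 0 := by
    intro a ha b hb
    have h1 := haniso (a + b) (Zc.add_mem ha hb)
    have h2 := haniso a ha
    have h3 := haniso b hb
    have h4 : B a b = B b a := hBsymm a b
    simp only [map_add, LinearMap.add_apply] at h1
    linarith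
  -- hence the center is contained in K
  have hK'eq : K' = BM.orthogonal Z' := by
    rw [← horthK, LinearMap.BilinForm.orthogonal_orthogonal hBMnd hBMrefl]
  have hZK' : Z' ≤ K' := by
    intro x hx
    rw [hK'eq, LinearMap.BilinForm.mem_orthogonal_iff]
    intro n hn
    exact htiso _ ((hmemZ' n).mp hn) _ ((hmemZ' x).mp hx)
  -- choose a complement of Z' and define W'
  obtain ⟨Cz, hCz⟩ := Submodule.exists_isCompl Z'
  set W' : Submodule ℝ ↥M := Cz ⊓ K' with hW'def
  have hWK' : W' ≤ K' := inf_le_right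
  have hK'sup : Z' ⊔ W' = K' := by
    rw [hW'def, ← sup_inf_assoc_of_le _ hZK', hCz.sup_eq_top, top_inf_eq]
  have hdisjZW : Disjoint Z' W' := hCz.disjoint.mono_right inf_le_left
  -- elements of Z' are orthogonal to K'
  have hZ'orth : ∀ z ∈ Z', ∀ k ∈ K', B (k : ↥M) ((z : ↥M) : L) = 0 := by
    intro z hz k hk
    have : (z : ↥M) ∈ BM.orthogonal K' := horthK ▸ hz
    exact this k hk
  -- W' is nondegenerate
  have hWnd' : ∀ x ∈ W', (∀ y ∈ W', BM x y = 0) → x = 0 := by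
    intro x hx hy
    have hxZ : x ∈ Z' := by
      rw [← horthK, LinearMap.BilinForm.mem_orthogonal_iff]
      intro n hn
      obtain ⟨z, hz, w, hw, rfl⟩ := Submodule.mem_sup.mp (hK'sup ▸ hn)
      have e1 : BM z x = 0 := hBMrefl _ _ (hZ'orth z hz x (hWK' hx))
      have e2 : BM w x = 0 := hBMrefl _ _ (hy w hw)
      show BM (z + w) x = 0
      rw [map_add, LinearMap.add_apply, e1, e2, add_zero]
    exact (Submodule.disjoint_def.mp hdisjZW) x hxZ hx
  have hWndRestr : (BM.restrict W').Nondegenerate := by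
    refine LinearMap.BilinForm.Nondegenerate.ofSeparatingLeft ?_
    rintro ⟨x, hx⟩ hbot
    rw [Submodule.mk_eq_zero]
    apply hWnd' x hx
    intro y hy
    exact hbot ⟨y, hy⟩
  -- the orthogonal complement U of W' in M
  set U : Submodule ℝ ↥M := BM.orthogonal W' with hUdef
  have hcomplWU : IsCompl W' U :=
    LinearMap.BilinForm.isCompl_orthogonal_of_restrict_nondegenerate hBMrefl hWndRestr
  have hZU : Z' ≤ U := by
    intro z hz
    rw [hUdef, LinearMap.BilinForm.mem_orthogonal_iff]
    intro w hw
    exact hZ'orth z hz w (hWK' hw)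
  have hUorth : ∀ u ∈ U, ∀ w ∈ W', BM w u = 0 := by
    intro u hu w hw; exact hu w hw
  -- B restricted to U is nondegenerate
  have hUnd : ∀ u ∈ U, (∀ v ∈ U, BM u v = 0) → u = 0 := by
    intro u hu hv
    apply hBMnd.1
    intro y
    obtain ⟨w, hw, v, hvU, rfl⟩ := Submodule.mem_sup.mp
      (hcomplWU.sup_eq_top ▸ Submodule.mem_top (x := y))
    rw [map_add, hBMrefl _ _ (hUorth u hu w hw), hv v hvU, add_zero]
  -- dimension bookkeeping
  have hfr1 : Module.finrank ℝ K' + Module.finrank ℝ Z' = Module.finrank ℝ ↥M := by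
    have h1 := LinearMap.BilinForm.finrank_orthogonal hBMnd K'
    rw [horthK] at h1
    have h2 : Module.finrank ℝ K' ≤ Module.finrank ℝ ↥M := K'.finrank_le
    omega
  have hfrK : Module.finrank ℝ Z' + Module.finrank ℝ W' = Module.finrank ℝ K' := by
    have := Submodule.finrank_sup_add_finrank_inf_eq Z' W'
    rw [hK'sup, hdisjZW.eq_bot, finrank_bot, add_zero] at this
    omega
  have hfrU : Module.finrank ℝ U = 2 * Module.finrank ℝ Z' := by
    have h1 := LinearMap.BilinForm.finrank_orthogonal hBMnd W'
    rw [← hUdef] at h1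
    omega
  -- a complement C of Z' inside U
  set C : Submodule ℝ ↥M := Cz ⊓ U with hCdef
  have hCU : C ≤ U := inf_le_right
  have hUsup : Z' ⊔ C = U := by
    rw [hCdef, ← sup_inf_assoc_of_le _ hZU, hCz.sup_eq_top, top_inf_eq]
  have hdisjZC : Disjoint Z' C := hCz.disjoint.mono_right inf_le_left
  have hfrC : Module.finrank ℝ C = Module.finrank ℝ Z' := by
    have := Submodule.finrank_sup_add_finrank_inf_eq Z' C
    rw [hUsup, hdisjZC.eq_bot, finrank_bot, add_zero] at this
    omega
  -- the pairing of Z' with C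
  have hZcoe : ∀ a : ↥Z', (((a : ↥M) : L)) ∈ Zc := fun a => a.2
  have hφex : ∃ φ : ↥C →ₗ[ℝ] ↥Z', ∀ c c' : ↥C,
      B (((φ c : ↥M)) : L) ((c' : ↥M) : L)
        = (1/2 : ℝ) * B ((c : ↥M) : L) ((c' : ↥M) : L) := by
    set r : ↥Z' →ₗ[ℝ] Module.Dual ℝ ↥C :=
      B.compl₁₂ (M.subtype ∘ₗ Z'.subtype) (M.subtype ∘ₗ C.subtype) with hrdef
    have hrapp : ∀ (a : ↥Z') (c : ↥C), r a c = B ((a : ↥M) : L) ((c : ↥M) : L) :=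
      fun a c => rfl
    have hrinj0 : ∀ a : ↥Z', r a = 0 → a = 0 := by
      intro a ha
      have : (a : ↥M) = 0 := by
        apply hUnd _ (hZU a.2)
        intro v hv
        obtain ⟨z, hz, c, hc, rfl⟩ := Submodule.mem_sup.mp (hUsup ▸ hv)
        rw [map_add]
        have e2 : BM (a : ↥M) z = 0 := htiso _ (hZcoe a) _ ((hmemZ' z).mp hz)
        have e3 : BM (a : ↥M) c = 0 := by
          have h5 := LinearMap.congr_fun ha ⟨c, hc⟩
          rw [hrapp] at h5
          exact h5
        rw [e2, e3, add_zero]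
      exact Subtype.ext this
    have hrinj : Function.Injective r := by
      intro a b hab
      have := hrinj0 (a - b) (by rw [map_sub, hab, sub_self])
      exact sub_eq_zero.mp this
    have hrsurj : Function.Surjective r := by
      refine (LinearMap.injective_iff_surjective_of_finrank_eq_finrank ?_).mp hrinj
      rw [Subspace.dual_finrank_eq, hfrC]
    set e : ↥Z' ≃ₗ[ℝ] Module.Dual ℝ ↥C := LinearEquiv.ofBijective r ⟨hrinj, hrsurj⟩
      with hedef
    set q : ↥C →ₗ[ℝ] Module.Dual ℝ ↥C :=
      (1/2 : ℝ) • (B.compl₁₂ (M.subtype ∘ₗ C.subtype) (M.subtype ∘ₗ C.subtype)) with hqdef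
    have hqapp : ∀ (c c' : ↥C), q c c' = (1/2 : ℝ) * B ((c : ↥M) : L) ((c' : ↥M) : L) :=
      fun c c' => rfl
    refine ⟨e.symm.toLinearMap ∘ₗ q, fun c c' => ?_⟩
    have h1 : r (e.symm (q c)) = q c := e.apply_symm_apply (q c)
    calc B (((e.symm.toLinearMap ∘ₗ q) c : ↥M) : L) ((c' : ↥M) : L)
        = r (e.symm (q c)) c' := (hrapp _ _).symm
      _ = q c c' := by rw [h1]
      _ = (1/2 : ℝ) * B ((c : ↥M) : L) ((c' : ↥M) : L) := hqapp c c'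
  obtain ⟨φ, hφapp⟩ := hφex
  -- the map defining Zstar
  set f : ↥C →ₗ[ℝ] ↥M := C.subtype - Z'.subtype ∘ₗ φ with hfdef
  have hfapp : ∀ c : ↥C, f c = (c : ↥M) - ((φ c : ↥M)) := fun c => rfl
  set Zs' : Submodule ℝ ↥M := LinearMap.range f with hZs'def
  have hZsU : Zs' ≤ U := by
    rintro _ ⟨c, rfl⟩
    rw [hfapp]
    exact U.sub_mem (hCU c.2) (hZU (φ c).2)
  have hZstiso' : ∀ x ∈ Zs', ∀ y ∈ Zs', B ((x : ↥M) : L) ((y : ↥M) : L) = 0 := by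
    rintro _ ⟨c, rfl⟩ _ ⟨c', rfl⟩
    rw [hfapp, hfapp]
    have e1 := hφapp c c'
    have e2 := hφapp c' c
    have e3 : B (((φ c : ↥M)) : L) (((φ c' : ↥M)) : L) =
        0 := htiso _ (hZcoe (φ c)) _ (hZcoe (φ c'))
    have e4 : B ((c : ↥M) : L) (((φ c' : ↥M)) : L) = (1/2 : ℝ) * B ((c : ↥M) : L) ((c' : ↥M) : L) := by
      rw [hBsymm, e2, hBsymm]
    simp only [Submodule.coe_sub]
    simp only [map_sub, LinearMap.sub_apply]
    rw [e1, e3, e4]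
    ring
  have hfinj : Function.Injective f := by
    intro c c' hcc
    rw [hfapp, hfapp, sub_eq_sub_iff_sub_eq_sub] at hcc
    have hmem1 : (c : ↥M) - (c' : ↥M) ∈ C := C.sub_mem c.2 c'.2
    have hmem2 : (c : ↥M) - (c' : ↥M) ∈ Z' := by
      rw [hcc]; exact Z'.sub_mem (φ c).2 (φ c').2
    have := Submodule.disjoint_def.mp hdisjZC _ hmem2 hmem1
    exact Subtype.ext (sub_eq_zero.mp this)
  have hfrZs : Module.finrank ℝ Zs' = Module.finrank ℝ C :=
    LinearMap.finrank_range_of_inj hfinj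
  have hdisjZZs : Disjoint Z' Zs' := by
    rw [Submodule.disjoint_def]
    rintro x hxZ ⟨c, rfl⟩
    have hcz : (c : ↥M) ∈ Z' := by
      have : (c : ↥M) = f c + ((φ c : ↥M)) := by rw [hfapp]; abel
      rw [this]
      exact Z'.add_mem hxZ (φ c).2
    have hc0 : (c : ↥M) = 0 := Submodule.disjoint_def.mp hdisjZC _ hcz c.2
    rw [hfapp, hc0]
    have : φ c = 0 := by
      have : c = 0 := Subtype.ext hc0
      rw [this, map_zero]
    rw [this]
    simp
  have hsupZZs : Z' ⊔ Zs' = U := by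
    apply Submodule.eq_of_le_of_finrank_le (sup_le hZU hZsU)
    have := Submodule.finrank_sup_add_finrank_inf_eq Z' Zs'
    rw [hdisjZZs.eq_bot, finrank_bot, add_zero] at this
    omega
  have hdisjZWZs : Disjoint (Z' ⊔ W') Zs' := by
    rw [Submodule.disjoint_def]
    intro x hx hxZs
    obtain ⟨z, hz, w, hw, rfl⟩ := Submodule.mem_sup.mp hx
    have hwU : w ∈ U := by
      have : w = (z + w) - z := by abel
      rw [this]
      exact U.sub_mem (hZsU hxZs) (hZU hz)
    have hw0 : w = 0 := Submodule.disjoint_def.mp hcomplWU.disjoint w hw hwU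
    rw [hw0, add_zero] at hxZs ⊢
    exact Submodule.disjoint_def.mp hdisjZZs z hz hxZs
  -- assemble everything, pushing forward to L
  have hsubinj : Function.Injective M.subtype := M.injective_subtype
  refine ⟨W'.map M.subtype, Zs'.map M.subtype, Submodule.map_subtype_le M W',
    Submodule.map_subtype_le M Zs', ?_, ?_, ?_, ?_, ?_, ?_, ?_, ?_, ?_, ?_⟩
  · -- Disjoint Zc W
    rw [Submodule.disjoint_def]
    rintro _ hxZ ⟨y, hyW, rfl⟩
    have hyZ : y ∈ Z' := by rw [hZ'def, Submodule.mem_comap]; exact hxZ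
    have h0 := Submodule.disjoint_def.mp hdisjZW y hyZ hyW
    rw [h0, map_zero]
  · -- Disjoint (Zc ⊔ W) Zstar
    rw [Submodule.disjoint_def]
    rintro x hx hxZs
    obtain ⟨y, hyZs, rfl⟩ := hxZs
    rw [← hmapZ, ← Submodule.map_sup] at hx
    obtain ⟨y', hy', he⟩ := hx
    have hyy : y' = y := hsubinj he
    rw [hyy] at hy'
    have h0 := Submodule.disjoint_def.mp hdisjZWZs y hy' hyZs
    rw [h0, map_zero]
  · -- Zc ⊔ W ⊔ Zstar = M
    rw [← hmapZ, ← Submodule.map_sup, ← Submodule.map_sup]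
    have htop : Z' ⊔ W' ⊔ Zs' = ⊤ := by
      rw [sup_assoc, sup_comm W' Zs', ← sup_assoc, hsupZZs, sup_comm U W',
        hcomplWU.sup_eq_top]
    rw [htop, Submodule.map_subtype_top]
  · -- span = Zc ⊔ W
    rw [← hmapK, ← hK'sup, Submodule.map_sup, hmapZ]
  · -- B nondegenerate on W
    rintro _ ⟨x, hxW, rfl⟩ hy
    have h0 : x = 0 := by
      apply hWnd' x hxW
      intro v hv
      rw [hBMapp]
      exact hy _ (Submodule.mem_map_of_mem hv)
    rw [h0, map_zero]
  · -- Zstar totally isotropic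
    rintro _ ⟨x, hx, rfl⟩ _ ⟨y, hy, rfl⟩
    exact hZstiso' x hx y hy
  · -- W ⟂ Zc
    rintro _ ⟨x, hxW, rfl⟩ y hy
    have hyZ : y ∈ Zc := hy
    have hyM : y ∈ M := hZM hyZ
    have hyZ' : (⟨y, hyM⟩ : ↥M) ∈ Z' := by rw [hZ'def, Submodule.mem_comap]; exact hyZ
    exact hZ'orth ⟨y, hyM⟩ hyZ' x (hWK' hxW)
  · -- W ⟂ Zstar
    rintro _ ⟨x, hxW, rfl⟩ _ ⟨y, hyZs, rfl⟩
    have h0 := hUorth y (hZsU hyZs) x hxW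
    rw [hBMapp] at h0
    exact h0
  · -- pairing: center side
    intro a ha hb
    have haZ : a ∈ Zc := ha
    have haM : a ∈ M := hZM haZ
    have haZ' : (⟨a, haM⟩ : ↥M) ∈ Z' := by rw [hZ'def, Submodule.mem_comap]; exact haZ
    have h0 : (⟨a, haM⟩ : ↥M) = 0 := by
      apply hUnd _ (hZU haZ')
      intro v hv
      obtain ⟨z, hz, s, hs, rfl⟩ := Submodule.mem_sup.mp (hsupZZs ▸ hv)
      have e1 : B a (z : L) = 0 := htiso _ haZ _ ((hmemZ' z).mp hz)
      have e2 : B a (s : L) = 0 := hb _ (Submodule.mem_map_of_mem hs)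
      show BM ⟨a, haM⟩ (z + s) = 0
      rw [map_add]
      show B a (z : L) + B a (s : L) = 0
      rw [e1, e2, add_zero]
    simpa using congrArg Subtype.val h0
  · -- pairing: Zstar side
    rintro _ ⟨b, hbZs, rfl⟩ hb
    have h0 : b = 0 := by
      apply hUnd _ (hZsU hbZs)
      intro v hv
      obtain ⟨z, hz, s, hs, rfl⟩ := Submodule.mem_sup.mp (hsupZZs ▸ hv)
      have e1 : B ((b : ↥M) : L) (z : L) = 0 := by
        rw [hBsymm]
        exact hb _ ((hmemZ' z).mp hz)
      have e2 : B ((b : ↥M) : L) (s : L) = 0 := hZstiso' b hbZs s hs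
      rw [map_add]
      show B ((b : ↥M) : L) (z : L) + B ((b : ↥M) : L) (s : L) = 0
      rw [e1, e2, add_zero]
    rw [h0, map_zero]
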